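/- The constant A(1) = ∫_0^∞ {t}²/t² dt equals log(2π) − γ, where γ is the Euler–Mascheroni constant. -/

import Mathlib

open MeasureTheory Set Real Filter Nat
open scoped Topology Interval

noncomputable def Tseq (N : ℕ) : ℝ :=
  2 * N - (harmonic N : ℝ) + 2 * Real.log (N !) - 2 * N * Real.log N

lemma Tseq_zero : Tseq 0 = 0 := by simp [Tseq]

lemma fract_bound {t : ℝ} (ht : 0 ≤ t) : Int.fract t ^ 2 / t ^ 2 ≤ 1 := by
  rcases eq_or_lt_of_le ht with h | h
  · simp [← h]
  · rw [div_le_one (by positivity)]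
    have h1 : Int.fract t ≤ t := by
      have := Int.floor_nonneg.mpr ht
      have : (0:ℝ) ≤ ⌊t⌋ := by exact_mod_cast this
      rw [Int.fract]; linarith
    exact pow_le_pow_left₀ (Int.fract_nonneg t) h1 2

lemma f_measurable : Measurable (fun t : ℝ => Int.fract t ^ 2 / t ^ 2) :=
  (measurable_fract.pow_const 2).div (measurable_id.pow_const 2)

lemma f_intervalIntegrable {a b : ℝ} (ha : 0 ≤ a) (hb : 0 ≤ b) :
    IntervalIntegrable (fun t : ℝ => Int.fract t ^ 2 / t ^ 2) volume a b := by
  rw [intervalIntegrable_iff]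
  apply Integrable.mono' (g := fun _ => (1:ℝ))
  · exact integrableOn_const measure_Ioc_lt_top.ne
  · exact f_measurable.aestronglyMeasurable.restrict
  · filter_upwards [ae_restrict_mem measurableSet_Ioc] with t ht
    have h0 : 0 ≤ t := le_trans (le_min ha hb) ht.1.le
    rw [Real.norm_eq_abs, abs_of_nonneg (by positivity)]
    exact fract_bound h0

lemma f_integrable : IntegrableOn (fun t : ℝ => Int.fract t ^ 2 / t ^ 2) (Ioi 0) := by
  have hsplit : Ioi (0:ℝ) = Ioc 0 1 ∪ Ioi 1 := by
    rw [Ioc_union_Ioi_eq_Ioi]; norm_num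
  rw [hsplit]
  apply IntegrableOn.union
  · apply Integrable.mono' (g := fun _ => (1:ℝ))
    · exact integrableOn_const measure_Ioc_lt_top.ne
    · exact f_measurable.aestronglyMeasurable.restrict
    · filter_upwards [ae_restrict_mem measurableSet_Ioc] with t ht
      rw [Real.norm_eq_abs, abs_of_nonneg (by positivity)]
      exact fract_bound ht.1.le
  · apply Integrable.mono' (g := fun t => t ^ (-2:ℝ))
    · exact integrableOn_Ioi_rpow_of_lt (by norm_num) one_pos
    · exact f_measurable.aestronglyMeasurable.restrict
    · filter_upwards [ae_restrict_mem measurableSet_Ioi] with t ht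
      have h0 : (0:ℝ) < t := lt_trans one_pos ht
      rw [Real.norm_eq_abs, abs_of_nonneg (by positivity),
        Real.rpow_neg h0.le, show (2:ℝ) = ((2:ℕ):ℝ) by norm_num, Real.rpow_natCast]
      rw [div_eq_mul_inv]
      have h1 : Int.fract t ^ 2 ≤ 1 := by
        have := Int.fract_nonneg t
        have := Int.fract_lt_one t
        nlinarith
      calc Int.fract t ^ 2 * (t ^ 2)⁻¹ ≤ 1 * (t ^ 2)⁻¹ := by
            apply mul_le_mul_of_nonneg_right h1 (by positivity)
        _ = (t ^ 2)⁻¹ := one_mul _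

lemma ae_ne (c : ℝ) : ∀ᵐ t : ℝ ∂volume, t ≠ c := by
  rw [ae_iff]
  simp only [ne_eq, not_not, setOf_eq_eq_singleton]
  exact measure_singleton c

lemma Jval (n : ℕ) :
    (∫ t in (n:ℝ)..((n:ℝ)+1), Int.fract t ^ 2 / t ^ 2) = Tseq (n+1) - Tseq n := by
  cases n with
  | zero =>
    have hcongr : ∀ᵐ t : ℝ ∂volume, t ∈ Ι (0:ℝ) (0+1) →
        Int.fract t ^ 2 / t ^ 2 = 1 := by
      filter_upwards [ae_ne 1] with t ht hmem
      rw [uIoc_of_le (by norm_num)] at hmem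
      have h1 : t < 1 := lt_of_le_of_ne (by simpa using hmem.2) ht
      rw [Int.fract_eq_self.mpr ⟨hmem.1.le, h1⟩]
      exact div_self (pow_ne_zero 2 hmem.1.ne')
    rw [show ((0:ℕ):ℝ) = (0:ℝ) by norm_num, intervalIntegral.integral_congr_ae hcongr]
    norm_num [Tseq, harmonic_succ]
  | succ m =>
    set n : ℕ := m + 1 with hn
    have hn1 : (1:ℝ) ≤ (n:ℝ) := by exact_mod_cast Nat.one_le_iff_ne_zero.mpr (by omega)
    -- replace fract by t - n a.e.
    have hcongr : ∀ᵐ t : ℝ ∂volume, t ∈ Ι (n:ℝ) ((n:ℝ)+1) →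
        Int.fract t ^ 2 / t ^ 2 = (t - n) ^ 2 / t ^ 2 := by
      filter_upwards [ae_ne ((n:ℝ)+1)] with t ht hmem
      rw [uIoc_of_le (by linarith)] at hmem
      have h2 : t < (n:ℝ) + 1 := lt_of_le_of_ne hmem.2 ht
      have hfl : ⌊t⌋ = (n : ℤ) := by
        rw [Int.floor_eq_iff]
        constructor
        · exact_mod_cast hmem.1.le
        · exact_mod_cast h2
      rw [Int.fract, hfl]
      norm_num
    rw [intervalIntegral.integral_congr_ae hcongr]
    -- FTC
    have hderiv : ∀ t ∈ uIcc (n:ℝ) ((n:ℝ)+1),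
        HasDerivAt (fun t : ℝ => t - 2*(n:ℝ)*Real.log t - (n:ℝ)^2 * t⁻¹)
          ((t - n)^2 / t^2) t := by
      intro t ht
      rw [uIcc_of_le (by linarith)] at ht
      have ht0 : t ≠ 0 := by have := ht.1; intro h; rw [h] at this; linarith
      have htpos : 0 < t := lt_of_lt_of_le (by linarith) ht.1
      have h1 : HasDerivAt (fun t : ℝ => t - 2*(n:ℝ)*Real.log t - (n:ℝ)^2 * t⁻¹)
          (1 - 2*(n:ℝ)*t⁻¹ - (n:ℝ)^2 * (-(t^2)⁻¹)) t := by
        exact ((hasDerivAt_id t).sub ((Real.hasDerivAt_log ht0).const_mul (2*(n:ℝ)))).sub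
          ((hasDerivAt_inv ht0).const_mul ((n:ℝ)^2))
      convert h1 using 1
      field_simp
      ring
    have hint : IntervalIntegrable (fun t : ℝ => (t - n)^2 / t^2) volume (n:ℝ) ((n:ℝ)+1) := by
      apply ContinuousOn.intervalIntegrable
      apply ContinuousOn.div ((continuous_id.sub continuous_const).pow 2).continuousOn
        (continuous_pow 2).continuousOn
      intro t ht
      rw [uIcc_of_le (by linarith)] at ht
      have : 0 < t := lt_of_lt_of_le (by linarith) ht.1
      positivity
    rw [intervalIntegral.integral_eq_sub_of_hasDerivAt hderiv hint]
    -- algebra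
    have hNpos : (0:ℝ) < (n:ℝ) := by linarith
    have hN1pos : (0:ℝ) < (n:ℝ) + 1 := by linarith
    have hfact : Real.log (((n+1)! : ℕ) : ℝ) = Real.log ((n:ℝ)+1) + Real.log ((n ! : ℕ) : ℝ) := by
      rw [Nat.factorial_succ]
      push_cast
      rw [Real.log_mul (by positivity) (Nat.cast_pos.mpr n.factorial_pos).ne']
    have hharm : ((harmonic (n+1) : ℚ) : ℝ) = ((harmonic n : ℚ) : ℝ) + ((n:ℝ)+1)⁻¹ := by
      rw [harmonic_succ]; push_cast; ring
    have hne1 : (n:ℝ) ≠ 0 := hNpos.ne'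
    have hne2 : (n:ℝ) + 1 ≠ 0 := hN1pos.ne'
    simp only [Tseq, hharm, hfact]
    push_cast
    field_simp
    ring
  
lemma Tseq_tendsto :
    Tendsto Tseq atTop (𝓝 (Real.log (2 * Real.pi) - Real.eulerMascheroniConstant)) := by
  have hs : Tendsto (fun N : ℕ => Real.log (Stirling.stirlingSeq N)) atTop
      (𝓝 (Real.log (√Real.pi))) :=
    ((Real.continuousAt_log (by positivity)).tendsto).comp Stirling.tendsto_stirlingSeq_sqrt_pi
  have hmain : Tendsto (fun N : ℕ =>
      2 * Real.log (Stirling.stirlingSeq N) + Real.log 2 - ((harmonic N : ℝ) - Real.log N))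
      atTop (𝓝 (2 * Real.log (√Real.pi) + Real.log 2 - Real.eulerMascheroniConstant)) :=
    ((hs.const_mul 2).add_const (Real.log 2)).sub Real.tendsto_harmonic_sub_log
  have hval : 2 * Real.log (√Real.pi) + Real.log 2 = Real.log (2 * Real.pi) := by
    rw [Real.log_sqrt Real.pi_pos.le, Real.log_mul (by norm_num) Real.pi_ne_zero]
    ring
  rw [hval] at hmain
  apply hmain.congr'
  filter_upwards [eventually_ne_atTop 0] with N hN
  have hNpos : (0:ℝ) < (N:ℝ) := by exact_mod_cast Nat.pos_of_ne_zero hN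
  rw [Stirling.log_stirlingSeq_formula,
    Real.log_mul (by norm_num) hNpos.ne',
    Real.log_div hNpos.ne' (Real.exp_ne_zero 1), Real.log_exp]
  simp only [Tseq]
  ring

theorem A_one_eq :
    (∫ t in Ioi (0:ℝ), (Int.fract t) ^ 2 / t ^ 2) =
      Real.log (2 * Real.pi) - Real.eulerMascheroniConstant := by
  have h1 : Tendsto (fun N : ℕ => ∫ t in (0:ℝ)..(N:ℝ), Int.fract t ^ 2 / t ^ 2)
      atTop (𝓝 (∫ t in Ioi (0:ℝ), Int.fract t ^ 2 / t ^ 2)) :=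
    intervalIntegral_tendsto_integral_Ioi 0 f_integrable tendsto_natCast_atTop_atTop
  have h2 : ∀ N : ℕ, (∫ t in (0:ℝ)..(N:ℝ), Int.fract t ^ 2 / t ^ 2) = Tseq N := by
    intro N
    have := intervalIntegral.sum_integral_adjacent_intervals
      (f := fun t : ℝ => Int.fract t ^ 2 / t ^ 2) (μ := volume)
      (a := fun k : ℕ => (k:ℝ)) (n := N)
      (fun k _ => f_intervalIntegrable k.cast_nonneg (k+1).cast_nonneg)
    simp only [Nat.cast_zero] at this
    rw [← this]
    have heq : ∀ k ∈ Finset.range N,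
        (∫ t in ((k:ℕ):ℝ)..(((k+1:ℕ)):ℝ), Int.fract t ^ 2 / t ^ 2) = Tseq (k+1) - Tseq k := by
      intro k _
      have hc : (((k+1:ℕ)):ℝ) = (k:ℝ) + 1 := by push_cast; ring
      rw [hc]
      exact Jval k
    rw [Finset.sum_congr rfl heq, Finset.sum_range_sub Tseq, Tseq_zero, sub_zero]
  simp only [h2] at h1
  exact tendsto_nhds_unique h1 Tseq_tendsto
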